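/- Let $\tfrac13<\gamma\le\tfrac12$, $\eta\ge 0$, $\epsilon>0$ with $\eta+\epsilon<\gamma$, and $i\in\{0,1,2\}$. There exists a constant $\tilde M<\infty$, depending only on $\gamma,\eta,\epsilon,i$, with the following property: for every $s<t$ and every nonnegative superadditive function $W$ on the subintervals of $[s,t]$, with dyadic points $\tau^n_m := s+\tfrac{n}{2^m}(t-s)$, one has $\sum_{m\ge0}\sum_{0\le n<2^m}\Big(1-\tfrac{2n}{2^{m+1}}\Big)^{\gamma(i-2)-\eta}\Big(\tfrac{1}{2^{m+1}}\Big)^{2\gamma+\eta+2\epsilon}\,W(\tau^{2n+1}_{m+1},\tau^{2n+2}_{m+1})^{2(\gamma-\eta-\epsilon)} \le \tilde M\, W(s,t)^{2(\gamma-\eta-\epsilon)}$. -/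

import Mathlib

open Finset
open scoped ENNReal

lemma chain_sum {s t : ℝ} (W : ℝ → ℝ → ℝ)
    (hW0 : ∀ u v, s ≤ u → u ≤ v → v ≤ t → 0 ≤ W u v)
    (hW : ∀ u v r, s ≤ u → u ≤ v → v ≤ r → r ≤ t → W u v + W v r ≤ W u r)
    (σ : ℕ → ℝ) (hmono : Monotone σ) (hs : s ≤ σ 0) :
    ∀ n, σ n ≤ t → ∑ k ∈ range n, W (σ k) (σ (k + 1)) ≤ W (σ 0) (σ n) := by
  intro n
  induction n with
  | zero => intro h; simpa using hW0 _ _ hs le_rfl h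
  | succ n ih =>
    intro h
    have h1 : σ n ≤ σ (n + 1) := hmono (Nat.le_succ n)
    have h2 : σ n ≤ t := le_trans h1 h
    rw [Finset.sum_range_succ]
    calc ∑ k ∈ range n, W (σ k) (σ (k + 1)) + W (σ n) (σ (n + 1))
        ≤ W (σ 0) (σ n) + W (σ n) (σ (n + 1)) := add_le_add_left (ih h2) _
      _ ≤ W (σ 0) (σ (n + 1)) := hW _ _ _ hs (hmono (Nat.zero_le n)) h1 h

lemma sumpow_bound {b : ℝ} (hb : 0 ≤ b) (m : ℕ) :
    ∑ j ∈ range (2 ^ m), ((j : ℝ) + 1) ^ (-b) ≤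
      ((m : ℝ) + 1) * max 1 ((2 : ℝ) ^ ((m : ℝ) * (1 - b))) := by
  induction m with
  | zero => norm_num [Real.one_rpow]
  | succ m ih =>
    have key1 : (2 : ℝ) ^ ((m : ℝ) * (1 - b)) ≤ max 1 ((2 : ℝ) ^ (((m : ℝ) + 1) * (1 - b))) := by
      rcases le_or_gt (1 - b) 0 with h | h
      · exact le_trans (Real.rpow_le_one_of_one_le_of_nonpos one_le_two
          (mul_nonpos_of_nonneg_of_nonpos (Nat.cast_nonneg m) h)) (le_max_left _ _)
      · exact le_trans (Real.rpow_le_rpow_of_exponent_le one_le_two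
          (by nlinarith [Nat.cast_nonneg (α := ℝ) m])) (le_max_right _ _)
    have key2 : max 1 ((2 : ℝ) ^ ((m : ℝ) * (1 - b))) ≤
        max 1 ((2 : ℝ) ^ (((m : ℝ) + 1) * (1 - b))) := max_le (le_max_left _ _) key1
    have hsplit : (2 : ℕ) ^ (m + 1) = 2 ^ m + 2 ^ m := by ring
    rw [hsplit, Finset.sum_range_add]
    have hsecond : ∑ x ∈ range (2 ^ m), ((↑(2 ^ m + x) : ℝ) + 1) ^ (-b) ≤
        (2 : ℝ) ^ ((m : ℝ) * (1 - b)) := by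
      have h2m : (0 : ℝ) < (2 : ℝ) ^ ((m : ℝ)) := Real.rpow_pos_of_pos two_pos _
      have hterm : ∀ x ∈ range (2 ^ m), ((↑(2 ^ m + x) : ℝ) + 1) ^ (-b) ≤
          ((2 : ℝ) ^ ((m : ℝ))) ^ (-b) := by
        intro x _
        apply Real.rpow_le_rpow_of_nonpos h2m _ (neg_nonpos.mpr hb)
        have h' : ((2 : ℝ) ^ ((m : ℝ))) = ((2 ^ m : ℕ) : ℝ) := by
          push_cast; exact Real.rpow_natCast 2 m
        rw [h']
        push_cast
        nlinarith [Nat.cast_nonneg (α := ℝ) x]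
      calc ∑ x ∈ range (2 ^ m), ((↑(2 ^ m + x) : ℝ) + 1) ^ (-b)
          ≤ ∑ _x ∈ range (2 ^ m), ((2 : ℝ) ^ ((m : ℝ))) ^ (-b) := Finset.sum_le_sum hterm
        _ = (2 : ℝ) ^ ((m : ℝ)) * ((2 : ℝ) ^ ((m : ℝ))) ^ (-b) := by
            rw [Finset.sum_const, Finset.card_range, nsmul_eq_mul]
            congr 1
            push_cast
            exact (Real.rpow_natCast 2 m).symm
        _ = (2 : ℝ) ^ ((m : ℝ) * (1 - b)) := by
            rw [← Real.rpow_mul (by norm_num : (0:ℝ) ≤ 2), ← Real.rpow_add two_pos]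
            congr 1; ring
    calc ∑ j ∈ range (2 ^ m), ((j : ℝ) + 1) ^ (-b) +
          ∑ x ∈ range (2 ^ m), ((↑(2 ^ m + x) : ℝ) + 1) ^ (-b)
        ≤ ((m : ℝ) + 1) * max 1 ((2 : ℝ) ^ ((m : ℝ) * (1 - b)))
            + (2 : ℝ) ^ ((m : ℝ) * (1 - b)) := add_le_add ih hsecond
      _ ≤ ((m : ℝ) + 1) * max 1 ((2 : ℝ) ^ (((m : ℝ) + 1) * (1 - b)))
            + max 1 ((2 : ℝ) ^ (((m : ℝ) + 1) * (1 - b))) :=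
          add_le_add (mul_le_mul_of_nonneg_left key2 (by positivity)) key1
      _ = ((↑(m + 1) : ℝ) + 1) * max 1 ((2 : ℝ) ^ ((↑(m + 1) : ℝ) * (1 - b))) := by
          push_cast; ring

set_option maxHeartbeats 2000000 in
theorem dyadic_estimate_two (γ η ε : ℝ) (i : ℕ)
    (hγl : 1 / 3 < γ) (hγu : γ ≤ 1 / 2) (hη : 0 ≤ η) (hε : 0 < ε)
    (hηε : η + ε < γ) (hi : i ≤ 2) :
    ∃ M : ℝ, 0 ≤ M ∧ ∀ (s t : ℝ), s < t →
      ∀ W : ℝ → ℝ → ℝ,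
        (∀ u v, s ≤ u → u ≤ v → v ≤ t → 0 ≤ W u v) →
        (∀ u v r, s ≤ u → u ≤ v → v ≤ r → r ≤ t → W u v + W v r ≤ W u r) →
        (∑' m : ℕ, ∑ k ∈ Finset.range (2 ^ m),
            ENNReal.ofReal
              ((1 - 2 * (k : ℝ) / 2 ^ (m + 1)) ^ (γ * ((i : ℝ) - 2) - η) *
                ((1 : ℝ) / 2 ^ (m + 1)) ^ (2 * γ + η + 2 * ε) *
                W (s + (2 * (k : ℝ) + 1) / 2 ^ (m + 1) * (t - s))
                    (s + (2 * (k : ℝ) + 2) / 2 ^ (m + 1) * (t - s)) ^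
                  (2 * (γ - η - ε))))
          ≤ ENNReal.ofReal (M * W s t ^ (2 * (γ - η - ε))) := by
  have hγ0 : 0 < γ := by linarith
  have hi2 : (i : ℝ) ≤ 2 := by exact_mod_cast hi
  have hi0 : (0 : ℝ) ≤ (i : ℝ) := Nat.cast_nonneg i
  set θ := 2 * (γ - η - ε) with hθdef
  have hθ0 : 0 < θ := by simp only [hθdef]; linarith
  have hθ1 : θ < 1 := by simp only [hθdef]; linarith
  have h1θ : 0 < 1 - θ := by linarith
  set q := 2 * γ + η + 2 * ε with hqdef
  have hq0 : 0 < q := by simp only [hqdef]; linarith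
  set β := η + γ * (2 - (i : ℝ)) with hβdef
  have hβ0 : 0 ≤ β := by
    have : 0 ≤ γ * (2 - (i : ℝ)) := mul_nonneg hγ0.le (by linarith)
    simp only [hβdef]; linarith
  set p := (1 - θ)⁻¹ with hpdef
  have hp1 : 1 < p := by
    rw [hpdef]
    rw [lt_inv_comm₀ one_pos h1θ]
    · simpa using by linarith
  have hpmul : p * (1 - θ) = 1 := by rw [hpdef]; field_simp
  have hpq : Real.HolderConjugate p θ⁻¹ := by
    rw [Real.holderConjugate_iff]; constructor
    · exact hp1
    · rw [hpdef, inv_inv, inv_inv]; ring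
  set b := β * p with hbdef
  have hb0 : 0 ≤ b := mul_nonneg hβ0 (by linarith)
  have hb1θ : b * (1 - θ) = β := by rw [hbdef]; linear_combination β * hpmul
  set δ := min (2 * ε) (4 * γ - η - 1) with hδdef
  have hδ0 : 0 < δ := lt_min (by linarith) (by linarith)
  have hδ2ε : δ ≤ 2 * ε := min_le_left _ _
  have hδ4 : δ ≤ 4 * γ - η - 1 := min_le_right _ _
  have hexp1 : β - q ≤ -δ := by
    have : 0 ≤ γ * (i : ℝ) := mul_nonneg hγ0.le hi0
    simp only [hβdef, hqdef]; nlinarith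
  have hexp2 : 1 - θ - q ≤ -δ := by simp only [hθdef, hqdef]; linarith
  set r := (2 : ℝ) ^ (-δ) with hrdef
  have hr0 : 0 < r := Real.rpow_pos_of_pos two_pos _
  have hr1 : r < 1 := Real.rpow_lt_one_of_one_lt_of_neg one_lt_two (by linarith)
  have hgsum : Summable (fun m : ℕ => 2 * ((m : ℝ) + 1) * r ^ m) := by
    have h1 : Summable (fun m : ℕ => (m : ℝ) * r ^ m) := by
      simpa using summable_pow_mul_geometric_of_norm_lt_one 1
        (r := r) (by rw [Real.norm_eq_abs, abs_of_pos hr0]; exact hr1)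
    have h2 : Summable (fun m : ℕ => r ^ m) :=
      summable_geometric_of_lt_one hr0.le hr1
    have h3 := (h1.add h2).mul_left 2
    refine h3.congr fun m => ?_
    ring
  refine ⟨∑' m : ℕ, 2 * ((m : ℝ) + 1) * r ^ m,
    tsum_nonneg (fun m => mul_nonneg (by positivity) (pow_nonneg hr0.le m)), ?_⟩
  intro s t hst W hW0 hWsup
  have hT : 0 < t - s := sub_pos.mpr hst
  have hWst : 0 ≤ W s t := hW0 s t le_rfl hst.le le_rfl
  have hk2m : ∀ m k : ℕ, k < 2 ^ m → (k : ℝ) + 1 ≤ 2 ^ m := by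
    intro m k hk
    exact_mod_cast Nat.succ_le_of_lt hk
  have hbase : ∀ m k : ℕ, k < 2 ^ m → (0 : ℝ) < 1 - 2 * (k : ℝ) / 2 ^ (m + 1) := by
    intro m k hk
    have h1 : (k : ℝ) + 1 ≤ 2 ^ m := hk2m m k hk
    have hD : (0 : ℝ) < 2 ^ (m + 1) := by positivity
    rw [sub_pos, div_lt_one hD, pow_succ]
    linarith
  have hord : ∀ m k : ℕ, k < 2 ^ m →
      s ≤ s + (2 * (k : ℝ) + 1) / 2 ^ (m + 1) * (t - s) ∧
      s + (2 * (k : ℝ) + 1) / 2 ^ (m + 1) * (t - s) ≤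
        s + (2 * (k : ℝ) + 2) / 2 ^ (m + 1) * (t - s) ∧
      s + (2 * (k : ℝ) + 2) / 2 ^ (m + 1) * (t - s) ≤ t := by
    intro m k hk
    have h1 : (k : ℝ) + 1 ≤ 2 ^ m := hk2m m k hk
    have hD : (0 : ℝ) < 2 ^ (m + 1) := by positivity
    have hD2 : ((2 : ℝ)) ^ (m + 1) = 2 ^ m * 2 := pow_succ 2 m
    have hk0 : (0 : ℝ) ≤ (k : ℝ) := Nat.cast_nonneg k
    refine ⟨?_, ?_, ?_⟩
    · have h2 : 0 ≤ (2 * (k : ℝ) + 1) / 2 ^ (m + 1) := by positivity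
      exact le_add_of_nonneg_right (mul_nonneg h2 hT.le)
    · have h2 : (2 * (k : ℝ) + 1) / 2 ^ (m + 1) ≤ (2 * (k : ℝ) + 2) / 2 ^ (m + 1) := by
        gcongr <;> linarith
      exact add_le_add_right (mul_le_mul_of_nonneg_right h2 hT.le) s
    · have h2 : (2 * (k : ℝ) + 2) / 2 ^ (m + 1) ≤ 1 := by
        rw [div_le_one hD, hD2]; linarith
      have h3 : (2 * (k : ℝ) + 2) / 2 ^ (m + 1) * (t - s) ≤ 1 * (t - s) :=
        mul_le_mul_of_nonneg_right h2 hT.le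
      linarith
  have key : ∀ m : ℕ, ∑ k ∈ Finset.range (2 ^ m),
      ((1 - 2 * (k : ℝ) / 2 ^ (m + 1)) ^ (γ * ((i : ℝ) - 2) - η) *
        ((1 : ℝ) / 2 ^ (m + 1)) ^ q *
        W (s + (2 * (k : ℝ) + 1) / 2 ^ (m + 1) * (t - s))
          (s + (2 * (k : ℝ) + 2) / 2 ^ (m + 1) * (t - s)) ^ θ)
      ≤ 2 * ((m : ℝ) + 1) * r ^ m * (W s t ^ θ) := by
    intro m
    have hD : (0 : ℝ) < 2 ^ (m + 1) := by positivity
    have hDm0 : (0 : ℝ) < (2 : ℝ) ^ m := by positivity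
    have hC0 : (0 : ℝ) ≤ ((1 : ℝ) / 2 ^ (m + 1)) ^ q := Real.rpow_nonneg (by positivity) q
    have hCp0 : (0 : ℝ) ≤ (((1 : ℝ) / 2 ^ (m + 1)) ^ q) ^ p := Real.rpow_nonneg hC0 p
    have hc_eq : ((1 : ℝ) / 2 ^ (m + 1)) ^ q = (2 : ℝ) ^ (-(((m : ℝ) + 1) * q)) := by
      rw [one_div, ← Real.rpow_natCast 2 (m + 1), ← Real.rpow_neg (by norm_num : (0:ℝ) ≤ 2),
        ← Real.rpow_mul (by norm_num : (0:ℝ) ≤ 2)]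
      congr 1
      push_cast
      ring
    have hrm : ∀ x : ℝ, x ≤ -δ → (2 : ℝ) ^ ((m : ℝ) * x) ≤ r ^ m := by
      intro x hx
      rw [hrdef, ← Real.rpow_natCast ((2:ℝ) ^ (-δ)) m, ← Real.rpow_mul (by norm_num : (0:ℝ) ≤ 2)]
      apply Real.rpow_le_rpow_of_exponent_le one_le_two
      nlinarith [Nat.cast_nonneg (α := ℝ) m, mul_le_mul_of_nonneg_left hx (Nat.cast_nonneg (α := ℝ) m)]
    have hA0 : ∀ k ∈ Finset.range (2 ^ m), (0:ℝ) ≤ (1 - 2 * (k : ℝ) / 2 ^ (m + 1)) ^ (γ * ((i : ℝ) - 2) - η) * ((1 : ℝ) / 2 ^ (m + 1)) ^ q := by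
      intro k hk
      exact mul_nonneg (Real.rpow_nonneg (hbase m k (Finset.mem_range.mp hk)).le _) hC0
    have hB0' : ∀ k ∈ Finset.range (2 ^ m), (0:ℝ) ≤ W (s + (2 * (k : ℝ) + 1) / 2 ^ (m + 1) * (t - s)) (s + (2 * (k : ℝ) + 2) / 2 ^ (m + 1) * (t - s)) := by
      intro k hk
      have h := hord m k (Finset.mem_range.mp hk)
      exact hW0 _ _ h.1 h.2.1 h.2.2
    have hB0 : ∀ k ∈ Finset.range (2 ^ m), (0:ℝ) ≤ W (s + (2 * (k : ℝ) + 1) / 2 ^ (m + 1) * (t - s)) (s + (2 * (k : ℝ) + 2) / 2 ^ (m + 1) * (t - s)) ^ θ := by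
      intro k hk
      exact Real.rpow_nonneg (hB0' k hk) θ
    have holder := Real.inner_le_Lp_mul_Lq_of_nonneg (Finset.range (2 ^ m)) hpq hA0 hB0
    -- the A-side
    have hApC : ∀ k ∈ Finset.range (2 ^ m), ((1 - 2 * (k : ℝ) / 2 ^ (m + 1)) ^ (γ * ((i : ℝ) - 2) - η) * ((1 : ℝ) / 2 ^ (m + 1)) ^ q) ^ p =
        ((((1 : ℝ) / 2 ^ (m + 1)) ^ q) ^ p * (2:ℝ) ^ ((m:ℝ) * b)) * (((2 ^ m - 1 - k : ℕ) : ℝ) + 1) ^ (-b) := by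
      intro k hk
      have hk' := Finset.mem_range.mp hk
      have hx := hbase m k hk'
      have hk1 : (k : ℝ) + 1 ≤ 2 ^ m := hk2m m k hk'
      rw [Real.mul_rpow (Real.rpow_nonneg hx.le _) hC0, ← Real.rpow_mul hx.le]
      have he : (γ * ((i:ℝ) - 2) - η) * p = -b := by rw [hbdef, hβdef]; ring
      rw [he]
      have hnum : (0 : ℝ) < (2:ℝ) ^ m - k := by linarith only [hk1]
      have hcast : ((2 ^ m - 1 - k : ℕ) : ℝ) + 1 = (2:ℝ) ^ m - k := by
        rw [Nat.sub_sub, Nat.cast_sub (by omega)]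
        push_cast
        ring
      have hxeq : 1 - 2 * (k:ℝ) / 2 ^ (m + 1) = ((2:ℝ) ^ m - k) / 2 ^ m := by
        rw [pow_succ]; field_simp
      rw [hxeq, hcast]
      have hsc : (((2:ℝ) ^ m - (k:ℝ)) / 2 ^ m) ^ (-b) =
          (2:ℝ) ^ ((m:ℝ) * b) * ((2:ℝ) ^ m - (k:ℝ)) ^ (-b) := by
        rw [Real.div_rpow hnum.le (by positivity), Real.rpow_neg (by positivity : (0:ℝ) ≤ (2:ℝ) ^ m) b,
          div_inv_eq_mul, mul_comm]
        congr 1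
        rw [← Real.rpow_natCast (2:ℝ) m, ← Real.rpow_mul (by norm_num : (0:ℝ) ≤ 2)]
      rw [hsc]
      ring
    have hAsum : ∑ k ∈ Finset.range (2 ^ m), ((1 - 2 * (k : ℝ) / 2 ^ (m + 1)) ^ (γ * ((i : ℝ) - 2) - η) * ((1 : ℝ) / 2 ^ (m + 1)) ^ q) ^ p ≤
        ((((1 : ℝ) / 2 ^ (m + 1)) ^ q) ^ p * (2:ℝ) ^ ((m:ℝ) * b)) *
          (((m:ℝ) + 1) * max 1 ((2:ℝ) ^ ((m:ℝ) * (1 - b)))) := by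
      calc ∑ k ∈ Finset.range (2 ^ m), ((1 - 2 * (k : ℝ) / 2 ^ (m + 1)) ^ (γ * ((i : ℝ) - 2) - η) * ((1 : ℝ) / 2 ^ (m + 1)) ^ q) ^ p
          = ∑ k ∈ Finset.range (2 ^ m),
            ((((1 : ℝ) / 2 ^ (m + 1)) ^ q) ^ p * (2:ℝ) ^ ((m:ℝ) * b)) * (((2 ^ m - 1 - k : ℕ) : ℝ) + 1) ^ (-b) :=
            Finset.sum_congr rfl hApC
        _ = ((((1 : ℝ) / 2 ^ (m + 1)) ^ q) ^ p * (2:ℝ) ^ ((m:ℝ) * b)) *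
              ∑ k ∈ Finset.range (2 ^ m), (((2 ^ m - 1 - k : ℕ) : ℝ) + 1) ^ (-b) := by
            rw [← Finset.mul_sum]
        _ = ((((1 : ℝ) / 2 ^ (m + 1)) ^ q) ^ p * (2:ℝ) ^ ((m:ℝ) * b)) *
              ∑ j ∈ Finset.range (2 ^ m), ((j : ℝ) + 1) ^ (-b) := by
            congr 1
            exact Finset.sum_range_reflect (fun j => ((j : ℝ) + 1) ^ (-b)) (2 ^ m)
        _ ≤ _ := mul_le_mul_of_nonneg_left (sumpow_bound hb0 m)
              (mul_nonneg hCp0 (Real.rpow_nonneg (by norm_num) _))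
    have hsumApC0 : (0:ℝ) ≤ ∑ k ∈ Finset.range (2 ^ m), ((1 - 2 * (k : ℝ) / 2 ^ (m + 1)) ^ (γ * ((i : ℝ) - 2) - η) * ((1 : ℝ) / 2 ^ (m + 1)) ^ q) ^ p :=
      Finset.sum_nonneg fun k hk => Real.rpow_nonneg (hA0 k hk) p
    have hmax0 : (0:ℝ) ≤ max 1 ((2:ℝ) ^ ((m:ℝ) * (1 - b))) :=
      le_trans zero_le_one (le_max_left _ _)
    have hm11 : (1:ℝ) ≤ (m:ℝ) + 1 := by
      have := Nat.cast_nonneg (α := ℝ) m; linarith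
    have hF1 : (∑ k ∈ Finset.range (2 ^ m), ((1 - 2 * (k : ℝ) / 2 ^ (m + 1)) ^ (γ * ((i : ℝ) - 2) - η) * ((1 : ℝ) / 2 ^ (m + 1)) ^ q) ^ p) ^ (1/p) ≤
        ((1 : ℝ) / 2 ^ (m + 1)) ^ q * (2:ℝ) ^ ((m:ℝ) * β) *
          (((m:ℝ) + 1) * (1 + (2:ℝ) ^ ((m:ℝ) * (1 - θ - β)))) := by
      have h1p : 1/p = 1 - θ := by rw [hpdef, one_div, inv_inv]
      have hCp : ((((1 : ℝ) / 2 ^ (m + 1)) ^ q) ^ p) ^ (1 - θ) = ((1 : ℝ) / 2 ^ (m + 1)) ^ q := by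
        rw [← Real.rpow_mul (by positivity : (0:ℝ) ≤ (1:ℝ) / 2 ^ (m+1)),
          ← Real.rpow_mul (by positivity : (0:ℝ) ≤ (1:ℝ) / 2 ^ (m+1))]
        rw [show q * p * (1 - θ) = q * (p * (1 - θ)) from by ring, hpmul, mul_one]
      have h2mb : ((2:ℝ) ^ ((m:ℝ) * b)) ^ (1 - θ) = (2:ℝ) ^ ((m:ℝ) * β) := by
        rw [← Real.rpow_mul (by norm_num : (0:ℝ) ≤ 2)]
        congr 1
        linear_combination (m:ℝ) * hb1θ
      have hm1 : ((m:ℝ) + 1) ^ (1 - θ) ≤ (m:ℝ) + 1 := by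
        nth_rewrite 2 [← Real.rpow_one ((m:ℝ) + 1)]
        exact Real.rpow_le_rpow_of_exponent_le hm11 (by linarith)
      have hmaxb : (max 1 ((2:ℝ) ^ ((m:ℝ) * (1 - b)))) ^ (1 - θ) ≤
          1 + (2:ℝ) ^ ((m:ℝ) * (1 - θ - β)) := by
        have hpos : (0:ℝ) ≤ (2:ℝ) ^ ((m:ℝ) * (1 - θ - β)) := Real.rpow_nonneg (by norm_num) _
        rcases le_total ((2:ℝ) ^ ((m:ℝ) * (1 - b))) 1 with h | h
        · rw [max_eq_left h, Real.one_rpow]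
          linarith
        · rw [max_eq_right h, ← Real.rpow_mul (by norm_num : (0:ℝ) ≤ 2)]
          have he : (m:ℝ) * (1 - b) * (1 - θ) = (m:ℝ) * (1 - θ - β) := by
            linear_combination (-(m:ℝ)) * hb1θ
          rw [he]
          linarith
      calc (∑ k ∈ Finset.range (2 ^ m), ((1 - 2 * (k : ℝ) / 2 ^ (m + 1)) ^ (γ * ((i : ℝ) - 2) - η) * ((1 : ℝ) / 2 ^ (m + 1)) ^ q) ^ p) ^ (1/p)
          ≤ (((((1 : ℝ) / 2 ^ (m + 1)) ^ q) ^ p * (2:ℝ) ^ ((m:ℝ) * b)) *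
              (((m:ℝ) + 1) * max 1 ((2:ℝ) ^ ((m:ℝ) * (1 - b))))) ^ (1/p) :=
            Real.rpow_le_rpow hsumApC0 hAsum (by rw [h1p]; linarith)
        _ = ((((1 : ℝ) / 2 ^ (m + 1)) ^ q) ^ p) ^ (1 - θ) * ((2:ℝ) ^ ((m:ℝ) * b)) ^ (1 - θ) *
              ((((m:ℝ) + 1)) ^ (1 - θ) * (max 1 ((2:ℝ) ^ ((m:ℝ) * (1 - b)))) ^ (1 - θ)) := by
            rw [h1p, Real.mul_rpow (mul_nonneg hCp0 (Real.rpow_nonneg (by norm_num) _))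
                (mul_nonneg (by linarith) hmax0),
              Real.mul_rpow hCp0 (Real.rpow_nonneg (by norm_num) _),
              Real.mul_rpow (by linarith : (0:ℝ) ≤ (m:ℝ) + 1) hmax0]
        _ = ((1 : ℝ) / 2 ^ (m + 1)) ^ q * (2:ℝ) ^ ((m:ℝ) * β) *
              ((((m:ℝ) + 1)) ^ (1 - θ) * (max 1 ((2:ℝ) ^ ((m:ℝ) * (1 - b)))) ^ (1 - θ)) := by
            rw [hCp, h2mb]
        _ ≤ ((1 : ℝ) / 2 ^ (m + 1)) ^ q * (2:ℝ) ^ ((m:ℝ) * β) *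
              (((m:ℝ) + 1) * (1 + (2:ℝ) ^ ((m:ℝ) * (1 - θ - β)))) := by
            apply mul_le_mul_of_nonneg_left
              (mul_le_mul hm1 hmaxb (Real.rpow_nonneg hmax0 _) (by linarith))
              (mul_nonneg hC0 (Real.rpow_nonneg (by norm_num) _))
    -- the B-side
    have hBsum : ∑ k ∈ Finset.range (2 ^ m), (W (s + (2 * (k : ℝ) + 1) / 2 ^ (m + 1) * (t - s)) (s + (2 * (k : ℝ) + 2) / 2 ^ (m + 1) * (t - s)) ^ θ) ^ θ⁻¹ ≤ W s t := by
      have heq : ∀ k ∈ Finset.range (2 ^ m), (W (s + (2 * (k : ℝ) + 1) / 2 ^ (m + 1) * (t - s)) (s + (2 * (k : ℝ) + 2) / 2 ^ (m + 1) * (t - s)) ^ θ) ^ θ⁻¹ = W (s + (2 * (k : ℝ) + 1) / 2 ^ (m + 1) * (t - s)) (s + (2 * (k : ℝ) + 2) / 2 ^ (m + 1) * (t - s)) := by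
        intro k hk
        rw [← Real.rpow_mul (hB0' k hk), mul_inv_cancel₀ hθ0.ne', Real.rpow_one]
      have hper : ∀ k ∈ Finset.range (2 ^ m), W (s + (2 * (k : ℝ) + 1) / 2 ^ (m + 1) * (t - s)) (s + (2 * (k : ℝ) + 2) / 2 ^ (m + 1) * (t - s)) ≤
          W (s + 2 * (k:ℝ) / 2 ^ (m + 1) * (t - s))
            (s + 2 * ((k:ℝ) + 1) / 2 ^ (m + 1) * (t - s)) := by
        intro k hk
        have hk' := Finset.mem_range.mp hk
        have h := hord m k hk'
        have hsa : s ≤ s + 2 * (k:ℝ) / 2 ^ (m + 1) * (t - s) :=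
          le_add_of_nonneg_right (by positivity)
        have ha : s + 2 * (k:ℝ) / 2 ^ (m + 1) * (t - s) ≤
            s + (2 * (k:ℝ) + 1) / 2 ^ (m + 1) * (t - s) := by
          apply add_le_add_right
          apply mul_le_mul_of_nonneg_right _ hT.le
          gcongr
          linarith
        have h4 : s + 2 * ((k:ℝ) + 1) / 2 ^ (m + 1) * (t - s) =
            s + (2 * (k:ℝ) + 2) / 2 ^ (m + 1) * (t - s) := by ring_nf
        rw [h4]
        have hsup := hWsup (s + 2 * (k:ℝ) / 2 ^ (m + 1) * (t - s)) _ _ hsa ha h.2.1 h.2.2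
        have hnn := hW0 (s + 2 * (k:ℝ) / 2 ^ (m + 1) * (t - s)) _ hsa ha
          (le_trans h.2.1 h.2.2)
        linarith
      have hmono : Monotone (fun k : ℕ => s + 2 * (k:ℝ) / 2 ^ (m + 1) * (t - s)) := by
        intro a c hac
        simp only
        have hac' : (a:ℝ) ≤ c := Nat.cast_le.mpr hac
        have h2 : 2 * (a:ℝ) / 2 ^ (m + 1) * (t - s) ≤ 2 * (c:ℝ) / 2 ^ (m + 1) * (t - s) := by
          apply mul_le_mul_of_nonneg_right _ hT.le
          gcongr
        linarith
      have h0 : s ≤ (fun k : ℕ => s + 2 * (k:ℝ) / 2 ^ (m + 1) * (t - s)) 0 := by norm_num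
      have hNt : (fun k : ℕ => s + 2 * (k:ℝ) / 2 ^ (m + 1) * (t - s)) (2 ^ m) ≤ t := by
        simp only
        have hone : 2 * ((2 ^ m : ℕ) : ℝ) / 2 ^ (m + 1) = 1 := by
          push_cast
          rw [pow_succ]
          field_simp
        rw [hone]
        linarith
      have hc := chain_sum W hW0 hWsup _ hmono h0 (2 ^ m) hNt
      have hend : W ((fun k : ℕ => s + 2 * (k:ℝ) / 2 ^ (m + 1) * (t - s)) 0)
          ((fun k : ℕ => s + 2 * (k:ℝ) / 2 ^ (m + 1) * (t - s)) (2 ^ m)) = W s t := by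
        simp only
        congr 1
        · norm_num
        · have hone : 2 * ((2 ^ m : ℕ) : ℝ) / 2 ^ (m + 1) = 1 := by
            push_cast
            rw [pow_succ]
            field_simp
          rw [hone]
          ring
      rw [hend] at hc
      refine le_trans (le_of_eq (Finset.sum_congr rfl heq)) (le_trans (Finset.sum_le_sum hper) (le_trans (le_of_eq (Finset.sum_congr rfl fun k _ => ?_)) hc))
      show W _ _ = W _ _
      congr 1
      push_cast
      ring
    have hF2 : (∑ k ∈ Finset.range (2 ^ m), (W (s + (2 * (k : ℝ) + 1) / 2 ^ (m + 1) * (t - s)) (s + (2 * (k : ℝ) + 2) / 2 ^ (m + 1) * (t - s)) ^ θ) ^ θ⁻¹) ^ (1/θ⁻¹) ≤ W s t ^ θ := by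
      rw [one_div, inv_inv]
      exact Real.rpow_le_rpow
        (Finset.sum_nonneg fun k hk => Real.rpow_nonneg (hB0 k hk) _) hBsum hθ0.le
    -- scalar estimate
    have hscalar : ((1 : ℝ) / 2 ^ (m + 1)) ^ q * (2:ℝ) ^ ((m:ℝ) * β) *
        (((m:ℝ) + 1) * (1 + (2:ℝ) ^ ((m:ℝ) * (1 - θ - β)))) ≤ 2 * ((m:ℝ) + 1) * r ^ m := by
      have hCle : ((1 : ℝ) / 2 ^ (m + 1)) ^ q ≤ (2:ℝ) ^ ((m:ℝ) * (-q)) := by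
        rw [hc_eq]
        apply Real.rpow_le_rpow_of_exponent_le one_le_two
        ring_nf
        nlinarith [hq0.le]
      have hX0 : (0:ℝ) ≤ ((m:ℝ) + 1) * (1 + (2:ℝ) ^ ((m:ℝ) * (1 - θ - β))) := by
        have := Real.rpow_nonneg (by norm_num : (0:ℝ) ≤ 2) ((m:ℝ) * (1 - θ - β))
        nlinarith
      calc ((1 : ℝ) / 2 ^ (m + 1)) ^ q * (2:ℝ) ^ ((m:ℝ) * β) * (((m:ℝ) + 1) * (1 + (2:ℝ) ^ ((m:ℝ) * (1 - θ - β))))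
          ≤ (2:ℝ) ^ ((m:ℝ) * (-q)) * (2:ℝ) ^ ((m:ℝ) * β) *
              (((m:ℝ) + 1) * (1 + (2:ℝ) ^ ((m:ℝ) * (1 - θ - β)))) := by
            apply mul_le_mul_of_nonneg_right
              (mul_le_mul_of_nonneg_right hCle (Real.rpow_nonneg (by norm_num) _)) hX0
        _ = ((m:ℝ) + 1) * ((2:ℝ) ^ ((m:ℝ) * (β - q)) + (2:ℝ) ^ ((m:ℝ) * (1 - θ - q))) := by
            rw [← Real.rpow_add two_pos,
              show (m:ℝ) * (β - q) = (m:ℝ) * (-q) + (m:ℝ) * β from by ring,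
              show (m:ℝ) * (1 - θ - q) = ((m:ℝ) * (-q) + (m:ℝ) * β) + (m:ℝ) * (1 - θ - β) from by ring,
              Real.rpow_add two_pos ((m:ℝ) * (-q) + (m:ℝ) * β)]
            ring
        _ ≤ ((m:ℝ) + 1) * (r ^ m + r ^ m) := by
            apply mul_le_mul_of_nonneg_left (add_le_add (hrm _ hexp1) (hrm _ hexp2))
            linarith
        _ = 2 * ((m:ℝ) + 1) * r ^ m := by ring
    refine le_trans holder ?_
    refine le_trans (mul_le_mul hF1 hF2
      (Real.rpow_nonneg (Finset.sum_nonneg fun k hk => Real.rpow_nonneg (hB0 k hk) _) _)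
      (by positivity)) ?_
    exact mul_le_mul_of_nonneg_right hscalar (Real.rpow_nonneg hWst θ)
  calc (∑' m : ℕ, ∑ k ∈ Finset.range (2 ^ m),
          ENNReal.ofReal
            ((1 - 2 * (k : ℝ) / 2 ^ (m + 1)) ^ (γ * ((i : ℝ) - 2) - η) *
              ((1 : ℝ) / 2 ^ (m + 1)) ^ q *
              W (s + (2 * (k : ℝ) + 1) / 2 ^ (m + 1) * (t - s))
                (s + (2 * (k : ℝ) + 2) / 2 ^ (m + 1) * (t - s)) ^ θ))
      = ∑' m : ℕ, ENNReal.ofReal (∑ k ∈ Finset.range (2 ^ m),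
            ((1 - 2 * (k : ℝ) / 2 ^ (m + 1)) ^ (γ * ((i : ℝ) - 2) - η) *
              ((1 : ℝ) / 2 ^ (m + 1)) ^ q *
              W (s + (2 * (k : ℝ) + 1) / 2 ^ (m + 1) * (t - s))
                (s + (2 * (k : ℝ) + 2) / 2 ^ (m + 1) * (t - s)) ^ θ)) := by
        refine tsum_congr fun m => ?_
        rw [ENNReal.ofReal_sum_of_nonneg]
        intro k hk
        have hk' := Finset.mem_range.mp hk
        have h := hord m k hk'
        have hA := Real.rpow_nonneg (hbase m k hk').le (γ * ((i : ℝ) - 2) - η)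
        have hB := Real.rpow_nonneg (hW0 _ _ h.1 h.2.1 h.2.2) θ
        have hc : (0 : ℝ) ≤ ((1 : ℝ) / 2 ^ (m + 1)) ^ q :=
          Real.rpow_nonneg (by positivity) q
        exact mul_nonneg (mul_nonneg hA hc) hB
    _ ≤ ∑' m : ℕ, ENNReal.ofReal (2 * ((m : ℝ) + 1) * r ^ m * (W s t ^ θ)) :=
        ENNReal.tsum_le_tsum fun m => ENNReal.ofReal_le_ofReal (key m)
    _ = ENNReal.ofReal (∑' m : ℕ, 2 * ((m : ℝ) + 1) * r ^ m * (W s t ^ θ)) :=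
        (ENNReal.ofReal_tsum_of_nonneg
          (fun m => mul_nonneg (mul_nonneg (by positivity) (pow_nonneg hr0.le m))
            (Real.rpow_nonneg hWst θ)) (hgsum.mul_right _)).symm
    _ = ENNReal.ofReal ((∑' m : ℕ, 2 * ((m : ℝ) + 1) * r ^ m) * (W s t ^ θ)) := by
        rw [tsum_mul_right]
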